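/- Let A = GR(p^n, r) be a Galois ring and let u, v be units of A. If there exists a unit z of GE(u) such that the image of u in GE(u) equals the image of v in GE(u) multiplied by z^e, then GE(u) and GE(v) are isomorphic as A-algebras; in other words, if u·γ = v for some γ ∈ A that becomes an e-th power of a unit in GE(u), then GE(u) ≅ GE(v). -/

import Mathlib

open Polynomial


open Polynomial

namespace GEAux

variable {A : Type} [CommRing A]

theorem ge_root_pow (e : ℕ) (a : A) :
    (AdjoinRoot.root (X ^ e - C a)) ^ e = algebraMap A _ a := by
  have h : (AdjoinRoot.mk (X ^ e - C a)) (X ^ e - C a) = 0 := AdjoinRoot.mk_self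
  rw [map_sub, sub_eq_zero, map_pow, AdjoinRoot.mk_X, AdjoinRoot.mk_C] at h
  rw [h, AdjoinRoot.algebraMap_eq]

noncomputable def geBasis [Nontrivial A] (e : ℕ) (he : e ≠ 0) (a : A) :
    Module.Basis (Fin e) A (AdjoinRoot (X ^ e - C a)) :=
  ((AdjoinRoot.powerBasis' (monic_X_pow_sub_C a he)).basis).reindex
    (finCongr (by simp [natDegree_X_pow_sub_C]))

theorem geBasis_apply [Nontrivial A] (e : ℕ) (he : e ≠ 0) (a : A) (i : Fin e) :
    geBasis e he a i = (AdjoinRoot.root (X ^ e - C a)) ^ (i : ℕ) := by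
  rw [geBasis, Module.Basis.reindex_apply, PowerBasis.basis_eq_pow]
  simp [AdjoinRoot.powerBasis'_gen]

theorem ge_ker_char [Nontrivial A] (p m e t : ℕ) (he : e ≠ 0) (ht : t ≤ e)
    (hpn : (p : A) ^ (m + 1) = 0) (u : Aˣ)
    (x : AdjoinRoot (X ^ e - C ((p : A) * u))) :
    (AdjoinRoot.root (X ^ e - C ((p : A) * u))) ^ (m * e + t) * x = 0 ↔
      ∀ i : Fin e, (i : ℕ) + t < e →
        (p : A) ^ m * ((geBasis e he ((p : A) * (u : A))).repr x i) = 0 := by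
  haveI : NeZero e := ⟨he⟩
  set ρ := AdjoinRoot.root (X ^ e - C ((p : A) * (u : A))) with hρ
  set b := geBasis e he ((p : A) * (u : A)) with hb
  have hρe : ρ ^ e = algebraMap A _ ((p : A) * (u : A)) := ge_root_pow e _
  have hsplit : ρ ^ (m * e + t) * x = ((u : A) ^ m * (p : A) ^ m) • (ρ ^ t * x) := by
    rw [pow_add, pow_mul', hρe, ← map_pow, mul_assoc, ← Algebra.smul_def, mul_pow,
      mul_comm ((p : A) ^ m)]
  have hu : IsUnit ((u : A) ^ m) := u.isUnit.pow m
  have step1 : (ρ ^ (m * e + t) * x = 0) ↔ ((p : A) ^ m) • (ρ ^ t * x) = 0 := by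
    rw [hsplit, mul_smul]
    exact hu.smul_eq_zero
  set c : Fin e → A := fun i => b.repr x i with hc
  set c' : ℕ → A := fun i => if h : i < e then c ⟨i, h⟩ else 0 with hc'
  have hcc : ∀ i : Fin e, c' (i : ℕ) = c i := by
    intro i
    simp only [hc']
    rw [dif_pos i.isLt, Fin.eta]
  have hexp : ((p : A) ^ m) • (ρ ^ t * x) =
      ∑ i : Fin e, ((p : A) ^ m * c i) • ρ ^ (t + (i : ℕ)) := by
    conv_lhs => rw [← b.sum_repr x]
    rw [Finset.mul_sum, Finset.smul_sum]
    refine Finset.sum_congr rfl fun i _ => ?_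
    rw [hb, geBasis_apply, mul_smul_comm, ← pow_add, smul_smul]
  set d : Fin e → A := fun j => if t ≤ (j : ℕ) then (p : A) ^ m * c' ((j : ℕ) - t) else 0 with hd
  have hsum : ∑ i : Fin e, ((p : A) ^ m * c i) • ρ ^ (t + (i : ℕ)) = ∑ j : Fin e, d j • b j := by
    refine Fintype.sum_equiv
      (Equiv.addRight (⟨t % e, Nat.mod_lt _ (Nat.pos_of_ne_zero he)⟩ : Fin e)) _ _ fun i => ?_
    simp only [Equiv.coe_addRight]
    set j : Fin e := i + ⟨t % e, Nat.mod_lt _ (Nat.pos_of_ne_zero he)⟩ with hj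
    have hjval : (j : ℕ) = ((i : ℕ) + t) % e := by
      rw [hj, Fin.add_def]
      simp only
      rw [Nat.add_mod (i : ℕ) t, Nat.mod_eq_of_lt i.isLt]
    by_cases hcase : t + (i : ℕ) < e
    · have hjv : (j : ℕ) = (i : ℕ) + t := by rw [hjval]; exact Nat.mod_eq_of_lt (by omega)
      rw [hd]
      simp only
      rw [if_pos (by omega : t ≤ (j : ℕ)), hb, geBasis_apply, hjv, Nat.add_sub_cancel, hcc,
        add_comm t (i : ℕ)]
    · have hjv : (j : ℕ) = (i : ℕ) + t - e := by
        rw [hjval, Nat.mod_eq_sub_mod (by omega)]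
        exact Nat.mod_eq_of_lt (by omega)
      have hlhs : ((p : A) ^ m * c i) • ρ ^ (t + (i : ℕ)) = 0 := by
        have h1 : t + (i : ℕ) = e + (t + (i : ℕ) - e) := by omega
        rw [h1, pow_add, hρe, Algebra.smul_def, ← mul_assoc, ← map_mul]
        have h2 : (p : A) ^ m * c i * ((p : A) * (u : A)) = 0 := by
          have : (p : A) ^ m * c i * ((p : A) * (u : A)) = (p : A) ^ (m + 1) * (c i * u) := by
            ring
          rw [this, hpn, zero_mul]
        rw [h2, map_zero, zero_mul]
      rw [hlhs, hd]
      simp only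
      rw [if_neg (by omega : ¬ t ≤ (j : ℕ)), zero_smul]
  have hzero : (∑ j : Fin e, d j • b j = 0) ↔ ∀ j, d j = 0 := by
    constructor
    · intro h0
      exact Fintype.linearIndependent_iff.mp b.linearIndependent d h0
    · intro h0
      simp [h0]
  rw [step1, hexp, hsum, hzero]
  constructor
  · intro H i hi
    have := H ⟨(i : ℕ) + t, by omega⟩
    rw [hd] at this
    simp only [if_pos (by omega : t ≤ (i : ℕ) + t)] at this
    rwa [Nat.add_sub_cancel, hcc] at this
  · intro H j
    rw [hd]
    simp only
    by_cases hj : t ≤ (j : ℕ)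
    · rw [if_pos hj]
      simp only [hc']
      rw [dif_pos (by omega : (j : ℕ) - t < e)]
      exact H ⟨(j : ℕ) - t, by omega⟩ (by simpa using by omega)
    · rw [if_neg hj]


noncomputable def quotSpanPairEquiv (f g : A[X]) :
    (Polynomial A ⧸ (Ideal.span {f, g} : Ideal (Polynomial A))) ≃+*
      (AdjoinRoot f ⧸ Ideal.span {AdjoinRoot.mk f g}) :=
  (Ideal.quotEquivOfEq (by rw [Ideal.span_insert])).trans <|
    (DoubleQuot.quotQuotEquivQuotSup (Ideal.span {f}) (Ideal.span {g})).symm.trans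
      (@Ideal.quotEquivOfEq (AdjoinRoot f) _ _ _ (Ideal.instIsTwoSided _) (Ideal.instIsTwoSided _) (by rw [Ideal.map_span, Set.image_singleton]; rfl))

theorem ge_finite [Finite A] [Nontrivial A] (p e s : ℕ) (he : e ≠ 0) (a : A) :
    Finite (Polynomial A ⧸ (Ideal.span {X ^ e - C ((p : A) * a), X ^ s} : Ideal (Polynomial A))) := by
  haveI : Finite (AdjoinRoot (X ^ e - C ((p : A) * a))) :=
    Finite.of_equiv _ (geBasis e he ((p : A) * a)).equivFun.symm.toEquiv
  haveI : Finite (AdjoinRoot (X ^ e - C ((p : A) * a)) ⧸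
      Ideal.span {AdjoinRoot.mk (X ^ e - C ((p : A) * a)) (X ^ s)}) :=
    Finite.of_surjective _ Ideal.Quotient.mk_surjective
  exact Finite.of_equiv _ (quotSpanPairEquiv (X ^ e - C ((p : A) * a)) (X ^ s)).symm.toEquiv

theorem ge_card [Fintype A] [Nontrivial A] (p m e t : ℕ) (he : e ≠ 0) (ht : t ≤ e)
    (hpn : (p : A) ^ (m + 1) = 0) (u : Aˣ) :
    Nat.card (Polynomial A ⧸
        (Ideal.span {X ^ e - C ((p : A) * u), X ^ (m * e + t)} : Ideal (Polynomial A))) =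
      Nat.card {c : Fin e → A // ∀ i : Fin e, (i : ℕ) + t < e → (p : A) ^ m * c i = 0} := by
  set s := m * e + t with hs
  set f : A[X] := X ^ e - C ((p : A) * (u : A)) with hf
  set b := geBasis e he ((p : A) * (u : A)) with hb
  haveI : Finite (AdjoinRoot f) := Finite.of_equiv _ b.equivFun.symm.toEquiv
  set ρ := AdjoinRoot.root f with hρ
  have hmk : AdjoinRoot.mk f (X ^ s) = ρ ^ s := by rw [map_pow, AdjoinRoot.mk_X]
  have h1 : Nat.card (Polynomial A ⧸ (Ideal.span {f, X ^ s} : Ideal (Polynomial A))) =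
      Nat.card (AdjoinRoot f ⧸ Ideal.span {ρ ^ s}) := by
    rw [← hmk]
    exact Nat.card_congr (quotSpanPairEquiv f (X ^ s)).toEquiv
  set L : AdjoinRoot f →ₗ[AdjoinRoot f] AdjoinRoot f := LinearMap.mulLeft (AdjoinRoot f) (ρ ^ s)
    with hL
  have hrange : LinearMap.range L = Ideal.span {ρ ^ s} := by
    ext y
    rw [LinearMap.mem_range, Ideal.mem_span_singleton']
    constructor
    · rintro ⟨c, rfl⟩
      exact ⟨c, by rw [hL, LinearMap.mulLeft_apply, mul_comm]⟩
    · rintro ⟨c, rfl⟩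
      exact ⟨c, by rw [hL, LinearMap.mulLeft_apply, mul_comm]⟩
  have h2 : Nat.card (AdjoinRoot f) =
      Nat.card (Ideal.span {ρ ^ s} : Ideal (AdjoinRoot f)) *
        Nat.card (AdjoinRoot f ⧸ Ideal.span {ρ ^ s}) :=
    Submodule.card_eq_card_quotient_mul_card _
  have h3 : Nat.card (AdjoinRoot f) =
      Nat.card (LinearMap.ker L) * Nat.card (AdjoinRoot f ⧸ LinearMap.ker L) :=
    Submodule.card_eq_card_quotient_mul_card _
  have h4 : Nat.card (AdjoinRoot f ⧸ LinearMap.ker L) =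
      Nat.card (Ideal.span {ρ ^ s} : Ideal (AdjoinRoot f)) := by
    rw [← hrange]
    exact Nat.card_congr (LinearMap.quotKerEquivRange L).toEquiv
  have hpos : 0 < Nat.card (Ideal.span {ρ ^ s} : Ideal (AdjoinRoot f)) := Nat.card_pos
  have h5 : Nat.card (AdjoinRoot f ⧸ Ideal.span {ρ ^ s}) = Nat.card (LinearMap.ker L) := by
    rw [h4] at h3
    have h7 := h3.symm.trans h2
    rw [mul_comm] at h7
    exact (Nat.eq_of_mul_eq_mul_left hpos h7).symm
  have h6 : Nat.card (LinearMap.ker L) =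
      Nat.card {c : Fin e → A // ∀ i : Fin e, (i : ℕ) + t < e → (p : A) ^ m * c i = 0} := by
    refine Nat.card_congr (b.equivFun.toEquiv.subtypeEquiv fun x => ?_)
    rw [LinearMap.mem_ker, hL, LinearMap.mulLeft_apply]
    have := ge_ker_char p m e t he ht hpn u x
    rw [hρ, hs]
    rw [← hb] at this
    refine this.trans ?_
    constructor
    · intro H i hi
      simpa only [LinearEquiv.coe_toEquiv, Module.Basis.equivFun_apply] using H i hi
    · intro H i hi
      simpa only [LinearEquiv.coe_toEquiv, Module.Basis.equivFun_apply] using H i hi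
  rw [h1, h5, h6]


theorem mem_subalgebra_of_unit_mul (I : Ideal (Polynomial A)) (s : ℕ)
    (hXs : (X : A[X]) ^ s ∈ I) (z : (Polynomial A ⧸ I)ˣ)
    (B : Subalgebra A (Polynomial A ⧸ I))
    (hyB : ((z⁻¹ : (Polynomial A ⧸ I)ˣ) : Polynomial A ⧸ I) * Ideal.Quotient.mk I X ∈ B) :
    ∀ x, x ∈ B := by
  set π := Ideal.Quotient.mk I X with hπ
  set y := ((z⁻¹ : (Polynomial A ⧸ I)ˣ) : Polynomial A ⧸ I) * π with hy'
  have hπs : π ^ s = 0 := by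
    rw [hπ, ← map_pow]
    exact Ideal.Quotient.eq_zero_iff_mem.mpr hXs
  have halg : ∀ a : A, algebraMap A (Polynomial A ⧸ I) a = Ideal.Quotient.mk I (C a) :=
    fun a => rfl
  have key : ∀ d k, s ≤ k + d → π ^ k ∈ B := by
    intro d
    induction d with
    | zero =>
      intro k hk
      have hzk : π ^ k = 0 := by
        have hks : k = s + (k - s) := by omega
        rw [hks, pow_add, hπs, zero_mul]
      rw [hzk]
      exact B.zero_mem
    | succ d ih =>
      intro k hk
      have hmulmem : ∀ q : A[X], π ^ (k + 1) * Ideal.Quotient.mk I q ∈ B := by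
        intro q
        induction q using Polynomial.induction_on' with
        | add q1 q2 hq1 hq2 =>
          rw [map_add, mul_add]
          exact B.add_mem hq1 hq2
        | monomial md ac =>
          rw [← C_mul_X_pow_eq_monomial, map_mul, map_pow, ← hπ]
          have hrw : π ^ (k + 1) * (Ideal.Quotient.mk I (C ac) * π ^ md) =
              algebraMap A _ ac * π ^ (k + 1 + md) := by
            rw [halg]
            ring
          rw [hrw]
          exact B.mul_mem (B.algebraMap_mem _) (ih (k + 1 + md) (by omega))
      obtain ⟨Q, hQ⟩ := Ideal.Quotient.mk_surjective (((z : Polynomial A ⧸ I)) ^ k)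
      have hQd : ((z : Polynomial A ⧸ I)) ^ k =
          algebraMap A _ (Q.coeff 0) + π * Ideal.Quotient.mk I Q.divX := by
        rw [halg, hπ, ← map_mul, ← map_add, ← hQ]
        congr 1
        rw [add_comm, X_mul_divX_add]
      have hπk : π ^ k = algebraMap A _ (Q.coeff 0) * y ^ k +
          π ^ (k + 1) * (Ideal.Quotient.mk I Q.divX *
            ((z⁻¹ : (Polynomial A ⧸ I)ˣ) : Polynomial A ⧸ I) ^ k) := by
        have h0 : π ^ k = ((z : Polynomial A ⧸ I)) ^ k * y ^ k := by
          rw [hy', mul_pow, ← mul_assoc, ← mul_pow, Units.mul_inv, one_pow, one_mul]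
        rw [h0, hQd, hy', mul_pow]
        ring
      rw [hπk]
      refine B.add_mem (B.mul_mem (B.algebraMap_mem _) (B.pow_mem hyB k)) ?_
      obtain ⟨G, hG⟩ := Ideal.Quotient.mk_surjective
        (Ideal.Quotient.mk I Q.divX * ((z⁻¹ : (Polynomial A ⧸ I)ˣ) : Polynomial A ⧸ I) ^ k)
      rw [← hG]
      exact hmulmem G
  intro x
  obtain ⟨q, rfl⟩ := Ideal.Quotient.mk_surjective x
  induction q using Polynomial.induction_on' with
  | add q1 q2 hq1 hq2 =>
    rw [map_add]
    exact B.add_mem hq1 hq2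
  | monomial md ac =>
    rw [← C_mul_X_pow_eq_monomial, map_mul, map_pow, ← hπ, ← halg]
    exact B.mul_mem (B.algebraMap_mem _) (key s md (by omega))

end GEAux

open GEAux

open Polynomial in
/-- The pure Galois–Eisenstein ring `GE(u) = A[X]/(X^e - p·u, X^s)` built from a ring `A`
(a Galois ring `GR(p^n, r)`), an element `u` of `A` and integers `e`, `s`. -/
abbrev GaloisEisenstein (p : ℕ) (A : Type) [CommRing A] (u : A) (e s : ℕ) : Type :=
  Polynomial A ⧸ (Ideal.span {X ^ e - C ((p : A) * u), X ^ s} : Ideal (Polynomial A))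

/-- **Isomorphism criterion for pure Galois–Eisenstein rings.** Let `A = GR(p^n, r)` be a
Galois ring and `u`, `v` units of `A`.  If the image of `u` in `GE(u)` equals the image of
`v` times `z^e` for some unit `z` of `GE(u)`, then `GE(u)` and `GE(v)` are isomorphic as
`A`-algebras. -/
theorem galoisEisenstein_iso_of_eth_power (p n r e s : ℕ) (hp : p.Prime)
    (hn : 2 ≤ n) (hr : 0 < r) (he : 1 ≤ e) (hs₁ : (n - 1) * e < s) (hs₂ : s ≤ n * e)
    (A : Type) [CommRing A] [Fintype A] [IsLocalRing A]
    (hchar : CharP A (p ^ n))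
    (hmax : IsLocalRing.maximalIdeal A = Ideal.span {(p : A)})
    (hres : Nat.card (IsLocalRing.ResidueField A) = p ^ r)
    (u v : Aˣ)
    (h : ∃ z : (GaloisEisenstein p A (u : A) e s)ˣ,
      algebraMap A (GaloisEisenstein p A (u : A) e s) (u : A) =
        algebraMap A (GaloisEisenstein p A (u : A) e s) (v : A) *
          (z : GaloisEisenstein p A (u : A) e s) ^ e) :
    Nonempty (GaloisEisenstein p A (u : A) e s ≃ₐ[A] GaloisEisenstein p A (v : A) e s) := by
  obtain ⟨z, hz⟩ := h
  set t := s - (n - 1) * e with htdef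
  have hm : n - 1 + 1 = n := by omega
  have hst : s = (n - 1) * e + t := by
    have h1 : (n - 1) * e ≤ s := le_of_lt hs₁
    omega
  have ht1 : t ≤ e := by
    have h2 : n * e = (n - 1) * e + e := by
      calc n * e = (n - 1 + 1) * e := by rw [hm]
      _ = (n - 1) * e + e := by ring
    omega
  have he0 : e ≠ 0 := by omega
  have hpn : (p : A) ^ (n - 1 + 1) = 0 := by
    rw [hm]
    have h3 := CharP.cast_eq_zero A (p ^ n)
    rwa [Nat.cast_pow] at h3
  set Iu : Ideal (Polynomial A) := Ideal.span {X ^ e - C ((p : A) * (u : A)), X ^ s} with hIu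
  set Iv : Ideal (Polynomial A) := Ideal.span {X ^ e - C ((p : A) * (v : A)), X ^ s} with hIv
  set π : GaloisEisenstein p A (u : A) e s := Ideal.Quotient.mk Iu X with hπ
  set y := ((z⁻¹ : (GaloisEisenstein p A (u : A) e s)ˣ) :
    GaloisEisenstein p A (u : A) e s) * π with hy
  have hXsIu : (X : A[X]) ^ s ∈ Iu := Ideal.subset_span (by simp)
  have hπs : π ^ s = 0 := by
    rw [hπ, ← map_pow]
    exact Ideal.Quotient.eq_zero_iff_mem.mpr hXsIu
  have hπe : π ^ e = algebraMap A _ ((p : A) * (u : A)) := by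
    have hmem : (X : A[X]) ^ e - C ((p : A) * (u : A)) ∈ Iu := Ideal.subset_span (by simp)
    have h4 := Ideal.Quotient.eq_zero_iff_mem.mpr hmem
    rw [map_sub, sub_eq_zero, map_pow] at h4
    rw [hπ, h4]
    rfl
  have hz1 : ((z⁻¹ : (GaloisEisenstein p A (u : A) e s)ˣ) :
      GaloisEisenstein p A (u : A) e s) ^ e * (z : GaloisEisenstein p A (u : A) e s) ^ e = 1 := by
    rw [← mul_pow, Units.inv_mul, one_pow]
  have hye : y ^ e = algebraMap A _ ((p : A) * (v : A)) := by
    have hm1 : algebraMap A (GaloisEisenstein p A (u : A) e s) ((p : A) * (u : A)) =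
        algebraMap A (GaloisEisenstein p A (u : A) e s) ((p : A)) *
          algebraMap A (GaloisEisenstein p A (u : A) e s) ((u : A)) := map_mul _ _ _
    have hm2 : algebraMap A (GaloisEisenstein p A (u : A) e s) ((p : A) * (v : A)) =
        algebraMap A (GaloisEisenstein p A (u : A) e s) ((p : A)) *
          algebraMap A (GaloisEisenstein p A (u : A) e s) ((v : A)) := map_mul _ _ _
    rw [hy, mul_pow, hπe]
    linear_combination (((z⁻¹ : (GaloisEisenstein p A (u : A) e s)ˣ) :
        GaloisEisenstein p A (u : A) e s) ^ e) * hm1 - hm2 +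
      (((z⁻¹ : (GaloisEisenstein p A (u : A) e s)ˣ) :
        GaloisEisenstein p A (u : A) e s) ^ e *
          algebraMap A (GaloisEisenstein p A (u : A) e s) ((p : A))) * hz +
      (algebraMap A (GaloisEisenstein p A (u : A) e s) ((p : A)) *
        algebraMap A (GaloisEisenstein p A (u : A) e s) ((v : A))) * hz1
  have hys : y ^ s = 0 := by rw [hy, mul_pow, hπs, mul_zero]
  have hgen : ∀ q ∈ Iv, (aeval y : A[X] →ₐ[A] GaloisEisenstein p A (u : A) e s) q = 0 := by
    have hle : Iv ≤ RingHom.ker (aeval y : A[X] →ₐ[A] GaloisEisenstein p A (u : A) e s) := by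
      rw [hIv, Ideal.span_le]
      rintro w hw
      simp only [Set.mem_insert_iff, Set.mem_singleton_iff] at hw
      rcases hw with rfl | rfl
      · show (aeval y) ((X : A[X]) ^ e - C ((p : A) * (v : A))) = 0
        rw [map_sub, map_pow, aeval_X, aeval_C, hye, sub_self]
      · show (aeval y) ((X : A[X]) ^ s) = 0
        rw [map_pow, aeval_X, hys]
    exact fun q hq => hle hq
  set φ : GaloisEisenstein p A (v : A) e s →ₐ[A] GaloisEisenstein p A (u : A) e s :=
    Ideal.Quotient.liftₐ Iv (aeval y) hgen with hφ
  have hφX : φ (Ideal.Quotient.mk Iv X) = y := by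
    rw [hφ, Ideal.Quotient.liftₐ_apply]
    exact aeval_X y
  have hsurj : Function.Surjective φ := by
    intro x
    exact φ.mem_range.mp
      (mem_subalgebra_of_unit_mul Iu s hXsIu z φ.range
        (φ.mem_range.mpr ⟨Ideal.Quotient.mk Iv X, hφX⟩) x)
  haveI : Finite (GaloisEisenstein p A (v : A) e s) := ge_finite p e s he0 (v : A)
  have hcard : Nat.card (GaloisEisenstein p A (v : A) e s) =
      Nat.card (GaloisEisenstein p A (u : A) e s) := by
    rw [hIu] at *
    rw [show (GaloisEisenstein p A (v : A) e s) = (Polynomial A ⧸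
      (Ideal.span {X ^ e - C ((p : A) * (v : A)), X ^ ((n-1) * e + t)} : Ideal (Polynomial A)))
      from by rw [← hst]]
    rw [show (GaloisEisenstein p A (u : A) e s) = (Polynomial A ⧸
      (Ideal.span {X ^ e - C ((p : A) * (u : A)), X ^ ((n-1) * e + t)} : Ideal (Polynomial A)))
      from by rw [← hst]]
    exact (ge_card p (n - 1) e t he0 ht1 hpn v).trans (ge_card p (n - 1) e t he0 ht1 hpn u).symm
  have hbij : Function.Bijective φ :=
    (Nat.bijective_iff_surjective_and_card φ).mpr ⟨hsurj, hcard⟩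
  exact ⟨(AlgEquiv.ofBijective φ hbij).symm⟩
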